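/- The model kernel satisfies the semigroup/idempotent property: ∫_{ℝ^{2n}} 𝒫(Z,Z'') 𝒫(Z'',Z') dZ'' = 𝒫(Z,Z') for all Z, Z' ∈ ℝ^{2n}. -/

import Mathlib

open MeasureTheory Complex

/-- The model Bergman kernel on `ℂⁿ × ℂⁿ`. -/
noncomputable def Pker (n : ℕ) (z z' : Fin n → ℂ) : ℂ :=
  Complex.exp (-(Real.pi : ℂ)/2 *
    ∑ i, ((‖z i‖ : ℂ)^2 + (‖z' i‖ : ℂ)^2 - 2 * z i * (starRingEnd ℂ) (z' i)))

lemma gauss_c (a b : ℂ) :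
    ∫ u : ℂ, Complex.exp (-(Real.pi : ℂ) * (‖u‖ : ℂ)^2 + a * (starRingEnd ℂ) u + b * u)
      = Complex.exp (a * b / Real.pi) := by
  have hπ0 : ((Real.pi : ℂ)) ≠ 0 := by exact_mod_cast Real.pi_ne_zero
  have hπ : ((-(Real.pi : ℂ))).re < 0 := by simpa using Real.pi_pos
  have key : (fun u : ℂ => Complex.exp (-(Real.pi : ℂ) * (‖u‖ : ℂ)^2
        + a * (starRingEnd ℂ) u + b * u))
      = fun u : ℂ => (fun p : ℝ × ℝ =>
          Complex.exp (-(Real.pi : ℂ) * (p.1:ℂ)^2 + (a + b) * p.1 + 0) *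
          Complex.exp (-(Real.pi : ℂ) * (p.2:ℂ)^2 + (I * (b - a)) * p.2 + 0))
          (measurableEquivRealProd u) := by
    funext u
    show _ = Complex.exp (-(Real.pi : ℂ) * (u.re:ℂ)^2 + (a + b) * u.re + 0) *
          Complex.exp (-(Real.pi : ℂ) * (u.im:ℂ)^2 + (I * (b - a)) * u.im + 0)
    rw [← Complex.exp_add]
    congr 1
    have h1r : ‖u‖^2 = u.re^2 + u.im^2 := by
      rw [Complex.sq_norm, Complex.normSq_apply]; ring
    have h1 : ((‖u‖ : ℂ))^2 = (u.re : ℂ)^2 + (u.im : ℂ)^2 := by exact_mod_cast h1r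
    have h2 : (starRingEnd ℂ) u = (u.re : ℂ) - (u.im : ℂ) * I := by
      simp [Complex.ext_iff]
    have h3 : u = (u.re : ℂ) + (u.im : ℂ) * I := (Complex.re_add_im u).symm
    linear_combination (-(Real.pi : ℂ)) * h1 + a * h2 + b * h3
  calc ∫ u : ℂ, Complex.exp (-(Real.pi : ℂ) * (‖u‖ : ℂ)^2
          + a * (starRingEnd ℂ) u + b * u)
      = ∫ p : ℝ × ℝ, Complex.exp (-(Real.pi : ℂ) * (p.1:ℂ)^2 + (a + b) * p.1 + 0) *
          Complex.exp (-(Real.pi : ℂ) * (p.2:ℂ)^2 + (I * (b - a)) * p.2 + 0) := by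
        rw [key]
        exact (volume_preserving_equiv_real_prod).integral_comp
          (measurableEquivRealProd).measurableEmbedding
          (fun p : ℝ × ℝ =>
            Complex.exp (-(Real.pi : ℂ) * (p.1:ℂ)^2 + (a + b) * p.1 + 0) *
            Complex.exp (-(Real.pi : ℂ) * (p.2:ℂ)^2 + (I * (b - a)) * p.2 + 0))
    _ = Complex.exp (a * b / Real.pi) := by
        rw [Measure.volume_eq_prod, integral_prod_mul
          (f := fun x : ℝ => Complex.exp (-(Real.pi : ℂ) * (x:ℂ)^2 + (a + b) * x + 0))
          (g := fun y : ℝ => Complex.exp (-(Real.pi : ℂ) * (y:ℂ)^2 + (I * (b - a)) * y + 0)),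
          integral_cexp_quadratic hπ, integral_cexp_quadratic hπ, neg_neg,
          div_self hπ0, one_cpow, one_mul, one_mul, ← Complex.exp_add]
        congr 1
        field_simp
        ring_nf
        rw [I_sq]
        ring

lemma coord (a b : ℂ) :
    ∫ u : ℂ, Complex.exp (-(Real.pi : ℂ)/2 * ((‖a‖ : ℂ)^2 + (‖u‖ : ℂ)^2 - 2 * a * (starRingEnd ℂ) u)
        + -(Real.pi : ℂ)/2 * ((‖u‖ : ℂ)^2 + (‖b‖ : ℂ)^2 - 2 * u * (starRingEnd ℂ) b))
      = Complex.exp (-(Real.pi : ℂ)/2 * ((‖a‖ : ℂ)^2 + (‖b‖ : ℂ)^2 - 2 * a * (starRingEnd ℂ) b)) := by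
  have hπ0 : ((Real.pi : ℂ)) ≠ 0 := by exact_mod_cast Real.pi_ne_zero
  have key : ∀ u : ℂ,
      Complex.exp (-(Real.pi : ℂ)/2 * ((‖a‖ : ℂ)^2 + (‖u‖ : ℂ)^2 - 2 * a * (starRingEnd ℂ) u)
        + -(Real.pi : ℂ)/2 * ((‖u‖ : ℂ)^2 + (‖b‖ : ℂ)^2 - 2 * u * (starRingEnd ℂ) b))
      = Complex.exp (-(Real.pi : ℂ)/2 * ((‖a‖ : ℂ)^2 + (‖b‖ : ℂ)^2)) *
          Complex.exp (-(Real.pi : ℂ) * (‖u‖ : ℂ)^2 + ((Real.pi : ℂ) * a) * (starRingEnd ℂ) u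
            + ((Real.pi : ℂ) * (starRingEnd ℂ) b) * u) := by
    intro u
    rw [← Complex.exp_add]
    congr 1
    ring
  simp_rw [key, integral_const_mul, gauss_c]
  rw [← Complex.exp_add]
  congr 1
  field_simp
  ring

/-- Idempotent (reproducing) property of the model kernel:
`∫ 𝒫(Z,Z'') 𝒫(Z'',Z') dZ'' = 𝒫(Z,Z')`. -/
theorem Pker_idempotent (n : ℕ) (z z' : Fin n → ℂ) :
    ∫ w : Fin n → ℂ, Pker n z w * Pker n w z' = Pker n z z' := by
  have key : ∀ w : Fin n → ℂ, Pker n z w * Pker n w z' =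
      ∏ i, Complex.exp (-(Real.pi : ℂ)/2 * ((‖z i‖ : ℂ)^2 + (‖w i‖ : ℂ)^2
          - 2 * z i * (starRingEnd ℂ) (w i))
        + -(Real.pi : ℂ)/2 * ((‖w i‖ : ℂ)^2 + (‖z' i‖ : ℂ)^2
          - 2 * w i * (starRingEnd ℂ) (z' i))) := by
    intro w
    rw [Pker, Pker, ← Complex.exp_add, ← Complex.exp_sum]
    congr 1
    rw [Finset.mul_sum, Finset.mul_sum, ← Finset.sum_add_distrib]
  simp_rw [key]
  rw [volume_pi, integral_fintype_prod_eq_prod (ι := Fin n)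
    (fun i u => Complex.exp (-(Real.pi : ℂ)/2 * ((‖z i‖ : ℂ)^2 + (‖u‖ : ℂ)^2
          - 2 * z i * (starRingEnd ℂ) u)
        + -(Real.pi : ℂ)/2 * ((‖u‖ : ℂ)^2 + (‖z' i‖ : ℂ)^2
          - 2 * u * (starRingEnd ℂ) (z' i))))]
  simp_rw [coord]
  rw [Pker, ← Complex.exp_sum]
  congr 1
  rw [Finset.mul_sum]
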